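/- arXiv:1503.06620 — 3 statements merged into one kernel-verified Lean document; each statement's English description precedes it below -/
import Mathlib

section
/- (Existence of multipoint Padé approximants) Let U ⊆ ℂ be open, let f be analytic on U, let n ≥ 1, and let ζ_1, …, ζ_{2n} ∈ U be (not necessarily distinct) interpolation nodes with W(z) := ∏_{k=1}^{2n} (z − ζ_k). Then there exist polynomials P of degree ≤ n − 1 and Q of degree ≤ n with Q not identically 0, together with a function h analytic on U, such that Q(z) f(z) − P(z) = W(z) h(z) for all z ∈ U. -/
open Polynomial Filter

/-- Iterated difference quotient (divided-difference) operator along a list of nodes. -/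
noncomputable def padeIterD : (ℂ → ℂ) → List ℂ → (ℂ → ℂ)
  | g, [] => g
  | g, a :: L => padeIterD (dslope g a) L

lemma padeIterD_nil (g : ℂ → ℂ) : padeIterD g [] = g := rfl

lemma padeIterD_cons (g : ℂ → ℂ) (a : ℂ) (L : List ℂ) :
    padeIterD g (a :: L) = padeIterD (dslope g a) L := rfl

lemma pade_dslope_congr {U : Set ℂ} (hU : IsOpen U) {a : ℂ} (ha : a ∈ U)
    {g₁ g₂ : ℂ → ℂ} (h : Set.EqOn g₁ g₂ U) : Set.EqOn (dslope g₁ a) (dslope g₂ a) U := by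
  intro z hz
  rcases eq_or_ne z a with rfl | hne
  · simp only [dslope_same]
    exact Filter.EventuallyEq.deriv_eq (Filter.eventuallyEq_of_mem (hU.mem_nhds ha) h)
  · rw [dslope_of_ne _ hne, dslope_of_ne _ hne, slope_def_field, slope_def_field, h hz, h ha]

lemma pade_dslope_add {U : Set ℂ} (hU : IsOpen U) {a : ℂ} (ha : a ∈ U) {g₁ g₂ : ℂ → ℂ}
    (h₁ : DifferentiableOn ℂ g₁ U) (h₂ : DifferentiableOn ℂ g₂ U) :
    Set.EqOn (dslope (g₁ + g₂) a) (dslope g₁ a + dslope g₂ a) U := by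
  intro z hz
  rcases eq_or_ne z a with rfl | hne
  · simp only [dslope_same, Pi.add_apply]
    have e : deriv (g₁ + g₂) z = deriv g₁ z + deriv g₂ z :=
      deriv_add (h₁.differentiableAt (hU.mem_nhds ha)) (h₂.differentiableAt (hU.mem_nhds ha))
    simpa using e
  · simp only [dslope_of_ne _ hne, slope_def_field, Pi.add_apply]
    ring

lemma pade_dslope_smul {U : Set ℂ} (hU : IsOpen U) {a : ℂ} (ha : a ∈ U) {g : ℂ → ℂ} (s : ℂ)
    (hg : DifferentiableOn ℂ g U) :
    Set.EqOn (dslope (s • g) a) (s • dslope g a) U := by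
  intro z hz
  rcases eq_or_ne z a with rfl | hne
  · simp only [dslope_same, Pi.smul_apply]
    have e : deriv (s • g) z = s • deriv g z :=
      deriv_const_smul s (hg.differentiableAt (hU.mem_nhds ha))
    simpa using e
  · simp only [dslope_of_ne _ hne, slope_def_field, Pi.smul_apply, smul_eq_mul]
    ring

lemma padeIterD_diff {U : Set ℂ} (hU : IsOpen U) (L : List ℂ) (hL : ∀ a ∈ L, a ∈ U)
    {g : ℂ → ℂ} (hg : DifferentiableOn ℂ g U) : DifferentiableOn ℂ (padeIterD g L) U := by
  induction L generalizing g with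
  | nil => exact hg
  | cons a L ih =>
    have ha : a ∈ U := hL a (by simp)
    exact ih (fun b hb => hL b (by simp [hb]))
      ((Complex.differentiableOn_dslope (hU.mem_nhds ha)).2 hg)

lemma padeIterD_congr {U : Set ℂ} (hU : IsOpen U) (L : List ℂ) (hL : ∀ a ∈ L, a ∈ U)
    {g₁ g₂ : ℂ → ℂ} (h : Set.EqOn g₁ g₂ U) :
    Set.EqOn (padeIterD g₁ L) (padeIterD g₂ L) U := by
  induction L generalizing g₁ g₂ with
  | nil => exact h
  | cons a L ih =>
    have ha : a ∈ U := hL a (by simp)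
    exact ih (fun b hb => hL b (by simp [hb])) (pade_dslope_congr hU ha h)

lemma padeIterD_add {U : Set ℂ} (hU : IsOpen U) (L : List ℂ) (hL : ∀ a ∈ L, a ∈ U)
    {g₁ g₂ : ℂ → ℂ} (h₁ : DifferentiableOn ℂ g₁ U) (h₂ : DifferentiableOn ℂ g₂ U) :
    Set.EqOn (padeIterD (g₁ + g₂) L) (padeIterD g₁ L + padeIterD g₂ L) U := by
  induction L generalizing g₁ g₂ with
  | nil => intro z _; rfl
  | cons a L ih =>
    have ha : a ∈ U := hL a (by simp)
    have hL' : ∀ b ∈ L, b ∈ U := fun b hb => hL b (by simp [hb])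
    have d₁ : DifferentiableOn ℂ (dslope g₁ a) U :=
      (Complex.differentiableOn_dslope (hU.mem_nhds ha)).2 h₁
    have d₂ : DifferentiableOn ℂ (dslope g₂ a) U :=
      (Complex.differentiableOn_dslope (hU.mem_nhds ha)).2 h₂
    intro z hz
    have e1 := padeIterD_congr hU L hL' (pade_dslope_add hU ha h₁ h₂) hz
    simp only [padeIterD_cons]
    exact e1.trans (ih hL' d₁ d₂ hz)

lemma padeIterD_smul {U : Set ℂ} (hU : IsOpen U) (L : List ℂ) (hL : ∀ a ∈ L, a ∈ U)
    {g : ℂ → ℂ} (s : ℂ) (hg : DifferentiableOn ℂ g U) :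
    Set.EqOn (padeIterD (s • g) L) (s • padeIterD g L) U := by
  induction L generalizing g with
  | nil => intro z _; rfl
  | cons a L ih =>
    have ha : a ∈ U := hL a (by simp)
    have hL' : ∀ b ∈ L, b ∈ U := fun b hb => hL b (by simp [hb])
    have d : DifferentiableOn ℂ (dslope g a) U :=
      (Complex.differentiableOn_dslope (hU.mem_nhds ha)).2 hg
    intro z hz
    have e1 := padeIterD_congr hU L hL' (pade_dslope_smul hU ha s hg) hz
    simp only [padeIterD_cons]
    exact e1.trans (ih hL' d hz)

/-- Hermite-type remainder: any analytic function can be written as a polynomial of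
controlled degree plus the node polynomial times an analytic function; the degree is
bounded by `m` provided the iterated divided differences of index `≥ m` vanish. -/
lemma pade_exists_rem {U : Set ℂ} (hU : IsOpen U) (L : List ℂ) (hL : ∀ a ∈ L, a ∈ U)
    (g : ℂ → ℂ) (hg : DifferentiableOn ℂ g U) (m : ℕ)
    (hvan : ∀ (k : ℕ) (hk : k < L.length), m ≤ k →
      padeIterD g (L.take k) (L.get ⟨k, hk⟩) = 0) :
    ∃ (R : Polynomial ℂ) (h : ℂ → ℂ), R.degree < (m : ℕ) ∧ DifferentiableOn ℂ h U ∧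
      ∀ z ∈ U, g z = R.eval z + (L.map (fun a => z - a)).prod * h z := by
  induction L generalizing g m with
  | nil =>
    refine ⟨0, g, ?_, hg, ?_⟩
    · rw [Polynomial.degree_zero]
      exact WithBot.bot_lt_coe m
    · intro z _; simp
  | cons a L ih =>
    have ha : a ∈ U := hL a (by simp)
    have hL' : ∀ b ∈ L, b ∈ U := fun b hb => hL b (by simp [hb])
    have hg₁ : DifferentiableOn ℂ (dslope g a) U :=
      (Complex.differentiableOn_dslope (hU.mem_nhds ha)).2 hg
    have key : ∀ z, g z = g a + (z - a) * dslope g a z := by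
      intro z
      have := sub_smul_dslope g a z
      rw [smul_eq_mul] at this
      linear_combination -this
    have hvan' : ∀ (k : ℕ) (hk : k < L.length), m - 1 ≤ k →
        padeIterD (dslope g a) (L.take k) (L.get ⟨k, hk⟩) = 0 := by
      intro k hk hmk
      have hk1 : k + 1 < (a :: L).length := by simpa using Nat.succ_lt_succ hk
      have := hvan (k + 1) hk1 (by omega)
      simpa [List.take_succ_cons, padeIterD_cons] using this
    obtain ⟨R₁, h, hdeg, hh, heq⟩ := ih hL' (dslope g a) hg₁ (m - 1) hvan'
    refine ⟨Polynomial.C (g a) + (Polynomial.X - Polynomial.C a) * R₁, h, ?_, hh, ?_⟩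
    · rcases Nat.eq_zero_or_pos m with hm | hm
      · subst hm
        have hga : g a = 0 := by
          have := hvan 0 (by simp) (le_refl 0)
          simpa [padeIterD_nil] using this
        have hR₁ : R₁ = 0 := by
          rw [← Polynomial.degree_eq_bot]
          exact Nat.WithBot.lt_zero_iff.mp hdeg
        simp [hga, hR₁]
      · refine lt_of_le_of_lt (Polynomial.degree_add_le _ _) (max_lt ?_ ?_)
        · exact lt_of_le_of_lt Polynomial.degree_C_le (by exact_mod_cast hm)
        · rw [Polynomial.degree_mul, Polynomial.degree_X_sub_C]
          rcases hc : R₁.degree with _ | d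
          · show (1 : WithBot ℕ) + (⊥ : WithBot ℕ) < ((m : ℕ) : WithBot ℕ)
            rw [WithBot.add_bot]
            exact WithBot.bot_lt_coe m
          · rw [hc] at hdeg
            have hd : d < m - 1 := by
              exact_mod_cast (show ((d : ℕ) : WithBot ℕ) < ((m - 1 : ℕ) : WithBot ℕ) from hdeg)
            show (1 : WithBot ℕ) + ((d : ℕ) : WithBot ℕ) < ((m : ℕ) : WithBot ℕ)
            have e : (1 : WithBot ℕ) + ((d : ℕ) : WithBot ℕ) = ((1 + d : ℕ) : WithBot ℕ) := by
              push_cast; ring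
            rw [e]
            exact_mod_cast (by omega : 1 + d < m)
    · intro z hz
      have := heq z hz
      simp only [List.map_cons, List.prod_cons, Polynomial.eval_add, Polynomial.eval_mul,
        Polynomial.eval_sub, Polynomial.eval_X, Polynomial.eval_C]
      rw [key z, this]
      ring

/-- Existence of multipoint Padé approximants: given `2n` interpolation nodes in an open set
`U` on which `f` is analytic, there are polynomials `P` (degree `≤ n-1`) and `Q ≠ 0`
(degree `≤ n`) such that `(Qf - P)/W` is analytic on `U`, i.e. `Qf - P = W·h` with `h`
analytic on `U`. -/
theorem multipoint_pade_exists (U : Set ℂ) (hU : IsOpen U) (f : ℂ → ℂ)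
    (hf : DifferentiableOn ℂ f U) (n : ℕ) (hn : 1 ≤ n)
    (ζ : Fin (2 * n) → ℂ) (hζ : ∀ k, ζ k ∈ U) :
    ∃ P Q : Polynomial ℂ, ∃ h : ℂ → ℂ,
      P.degree ≤ ((n - 1 : ℕ) : WithBot ℕ) ∧ Q.degree ≤ (n : ℕ) ∧ Q ≠ 0 ∧
      DifferentiableOn ℂ h U ∧
      ∀ z ∈ U, Q.eval z * f z - P.eval z = (∏ k, (z - ζ k)) * h z := by
  classical
  set L : List ℂ := List.ofFn ζ with hLdef
  have hLlen : L.length = 2 * n := by simp [hLdef]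
  have hLmem : ∀ a ∈ L, a ∈ U := by
    intro a haL
    rw [hLdef, List.mem_ofFn] at haL
    obtain ⟨i, rfl⟩ := haL
    exact hζ i
  -- the candidate numerator functions
  set G : (Fin (n + 1) → ℂ) → (ℂ → ℂ) :=
    fun c z => (∑ i : Fin (n + 1), c i * z ^ (i : ℕ)) * f z with hGdef
  have hGdiff : ∀ c, DifferentiableOn ℂ (G c) U := by
    intro c
    apply DifferentiableOn.mul _ hf
    apply Differentiable.differentiableOn
    apply Differentiable.fun_sum
    intro i _
    exact (differentiable_pow _).const_mul _
  have hGadd : ∀ c c', G (c + c') = G c + G c' := by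
    intro c c'
    funext z
    simp only [hGdef, Pi.add_apply, add_mul, Finset.sum_add_distrib]
  have hGsmul : ∀ (s : ℂ) c, G (s • c) = s • G c := by
    intro s c
    funext z
    simp only [hGdef, Pi.smul_apply, smul_eq_mul]
    have e : (∑ i : Fin (n + 1), s * c i * z ^ (i : ℕ)) =
        s * ∑ i : Fin (n + 1), c i * z ^ (i : ℕ) := by
      rw [Finset.mul_sum]
      exact Finset.sum_congr rfl fun i _ => by ring
    rw [e, mul_assoc]
  -- the linear conditions
  have hidx : ∀ j : Fin n, n + (j : ℕ) < 2 * n := fun j => by omega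
  set φ : (Fin (n + 1) → ℂ) →ₗ[ℂ] (Fin n → ℂ) :=
    { toFun := fun c j => padeIterD (G c) (L.take (n + j)) (ζ ⟨n + j, hidx j⟩)
      map_add' := by
        intro c c'
        funext j
        rw [hGadd]
        have := padeIterD_add hU (L.take (n + j)) (fun b hb => hLmem b (List.take_subset _ _ hb))
          (hGdiff c) (hGdiff c') (hζ ⟨n + j, hidx j⟩)
        simpa using this
      map_smul' := by
        intro s c
        funext j
        rw [hGsmul]
        have := padeIterD_smul hU (L.take (n + j)) (fun b hb => hLmem b (List.take_subset _ _ hb))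
          s (hGdiff c) (hζ ⟨n + j, hidx j⟩)
        simpa using this } with hφdef
  have hnoninj : ¬ Function.Injective φ := by
    intro hinj
    have := LinearMap.finrank_le_finrank_of_injective hinj
    simp only [Module.finrank_fintype_fun_eq_card, Fintype.card_fin] at this
    omega
  obtain ⟨c₁, c₂, hcc, hne⟩ := Function.not_injective_iff.mp hnoninj
  set c : Fin (n + 1) → ℂ := c₁ - c₂ with hcdef
  have hc0 : c ≠ 0 := sub_ne_zero.mpr hne
  have hφc : φ c = 0 := by rw [hcdef, map_sub, hcc, sub_self]
  -- the denominator polynomial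
  set Q : Polynomial ℂ := ∑ i : Fin (n + 1), Polynomial.monomial (i : ℕ) (c i) with hQdef
  have hQeval : ∀ z, Q.eval z = ∑ i : Fin (n + 1), c i * z ^ (i : ℕ) := by
    intro z
    rw [hQdef, Polynomial.eval_finset_sum]
    simp [Polynomial.eval_monomial]
  have hQne : Q ≠ 0 := by
    obtain ⟨i, hi⟩ := Function.ne_iff.mp hc0
    intro hQ0
    apply hi
    have hco : Q.coeff (i : ℕ) = c i := by
      rw [hQdef, Polynomial.finset_sum_coeff]
      rw [Finset.sum_eq_single i]
      · simp [Polynomial.coeff_monomial]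
      · intro j _ hj
        rw [Polynomial.coeff_monomial, if_neg (fun hji => hj (Fin.ext hji))]
      · simp
    rw [hQ0, Polynomial.coeff_zero] at hco
    simp [← hco]
  have hQdeg : Q.degree ≤ (n : ℕ) := by
    rw [hQdef]
    refine (Polynomial.degree_sum_le _ _).trans (Finset.sup_le fun i _ => ?_)
    exact (Polynomial.degree_monomial_le _ _).trans (by exact_mod_cast (by omega : (i : ℕ) ≤ n))
  have hGQ : G c = fun z => Q.eval z * f z := by
    funext z
    rw [hQeval]
  -- vanishing conditions for the remainder lemma
  have hvan : ∀ (k : ℕ) (hk : k < L.length), n ≤ k →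
      padeIterD (G c) (L.take k) (L.get ⟨k, hk⟩) = 0 := by
    intro k hk hnk
    have hk2 : k < 2 * n := by rwa [hLlen] at hk
    have hj : k - n < n := by omega
    have h0 := congrFun hφc ⟨k - n, hj⟩
    simp only [hφdef, LinearMap.coe_mk, AddHom.coe_mk, Pi.zero_apply] at h0
    have hget : L.get ⟨k, hk⟩ = ζ ⟨k, hk2⟩ :=
      (List.get_ofFn ζ ⟨k, hk⟩).trans (congrArg ζ (Fin.ext rfl))
    rw [hget]
    have hfin : (⟨n + (k - n), hidx ⟨k - n, hj⟩⟩ : Fin (2 * n)) = ⟨k, hk2⟩ :=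
      Fin.ext (by simp; omega)
    have htake : n + (k - n) = k := by omega
    rw [hfin, htake] at h0
    exact h0
  obtain ⟨R, h, hRdeg, hh, heq⟩ := pade_exists_rem hU L hLmem (G c) (hGdiff c) n hvan
  refine ⟨R, Q, h, ?_, hQdeg, hQne, hh, ?_⟩
  · rcases hd : R.degree with _ | d
    · exact bot_le
    · rw [hd] at hRdeg
      have h1 : d < n := WithBot.coe_lt_coe.mp hRdeg
      have h2 : d ≤ n - 1 := by omega
      exact WithBot.coe_le_coe.mpr (by simpa using h2)
  · intro z hz
    have := heq z hz
    rw [hGQ] at this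
    simp only at this
    have hprod : (L.map (fun a => z - a)).prod = ∏ k, (z - ζ k) := by
      rw [hLdef, List.map_ofFn, List.prod_ofFn]
      rfl
    rw [hprod] at this
    linear_combination this
end

section
/- (Orthogonality of multipoint Padé denominators for Markov functions) Let σ be a finite positive Borel measure on ℝ whose support is contained in a compact interval F, and let f(z) := ∫ dσ(t)/(t − z) for z ∈ ℂ \ F. Let n ≥ 1, let ζ_1, …, ζ_{2n} be real numbers not lying in F, and set W(z) := ∏_{k=1}^{2n} (z − ζ_k). Suppose P is a polynomial of degree ≤ n − 1 and Q is a polynomial of degree ≤ n with Q not identically 0, and suppose there is a function h analytic on ℂ \ F with Q(z) f(z) − P(z) = W(z) h(z) for all z ∈ ℂ \ F. Then ∫ Q(t) t^j / W(t) dσ(t) = 0 for every j = 0, 1, …, n − 1. -/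
open Polynomial Filter MeasureTheory Metric Complex

lemma poly_bound (p : Polynomial ℂ) (N : ℕ) (hd : p.degree ≤ (N : WithBot ℕ)) :
    ∃ C : ℝ, 0 ≤ C ∧ ∀ z : ℂ, 1 ≤ ‖z‖ → ‖p.eval z‖ ≤ C * ‖z‖ ^ N := by
  refine ⟨∑ i ∈ Finset.range (N + 1), ‖p.coeff i‖,
    Finset.sum_nonneg fun _ _ => norm_nonneg _, fun z hz => ?_⟩
  have hnd : p.natDegree < N + 1 := Nat.lt_succ_of_le (Polynomial.natDegree_le_iff_degree_le.2 hd)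
  rw [Polynomial.eval_eq_sum_range' hnd]
  calc ‖∑ i ∈ Finset.range (N+1), p.coeff i * z ^ i‖
      ≤ ∑ i ∈ Finset.range (N+1), ‖p.coeff i * z ^ i‖ := norm_sum_le _ _
    _ ≤ ∑ i ∈ Finset.range (N+1), ‖p.coeff i‖ * ‖z‖ ^ N := by
        refine Finset.sum_le_sum fun i hi => ?_
        rw [norm_mul, norm_pow]
        exact mul_le_mul_of_nonneg_left
          (pow_le_pow_right₀ hz (Nat.lt_succ_iff.1 (Finset.mem_range.1 hi))) (norm_nonneg _)
    _ = (∑ i ∈ Finset.range (N+1), ‖p.coeff i‖) * ‖z‖ ^ N := (Finset.sum_mul _ _ _).symm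

set_option maxHeartbeats 1600000 in
/-- Orthogonality of multipoint Padé denominators for Markov functions:
if `(Qf - P)/W` extends analytically to `ℂ \\ F` (with `F = [a,b]` a compact interval
containing the support of `σ`, `f` the Markov function of `σ`, real nodes off `F`),
then `∫ Q(t) tʲ / W(t) dσ(t) = 0` for `j = 0, …, n-1`. -/
theorem multipoint_pade_orthogonality (σ : Measure ℝ) [IsFiniteMeasure σ] (a b : ℝ)
    (hab : a ≤ b) (hsupp : σ (Set.Icc a b)ᶜ = 0)
    (n : ℕ) (hn : 1 ≤ n) (ζ : Fin (2 * n) → ℝ) (hζ : ∀ k, ζ k ∉ Set.Icc a b)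
    (P Q : Polynomial ℂ) (hP : P.degree ≤ ((n - 1 : ℕ) : WithBot ℕ))
    (hQ : Q.degree ≤ (n : ℕ)) (hQ0 : Q ≠ 0) (h : ℂ → ℂ)
    (hh : DifferentiableOn ℂ h ((fun x : ℝ => (x : ℂ)) '' Set.Icc a b)ᶜ)
    (heq : ∀ z ∈ ((fun x : ℝ => (x : ℂ)) '' Set.Icc a b)ᶜ,
      Q.eval z * (∫ t, ((t : ℂ) - z)⁻¹ ∂σ) - P.eval z = (∏ k, (z - (ζ k : ℂ))) * h z) :
    ∀ j < n, ∫ t, Q.eval (t : ℂ) * (t : ℂ) ^ j / (∏ k, ((t : ℂ) - (ζ k : ℂ))) ∂σ = 0 := by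
  classical
  intro j hj
  obtain ⟨m, rfl⟩ : ∃ m, n = m + 1 := ⟨n - 1, (Nat.succ_pred_eq_of_pos hn).symm⟩
  have hjm : j ≤ m := Nat.lt_succ_iff.1 hj
  -- notation
  set Fset : Set ℂ := (fun x : ℝ => (x : ℂ)) '' Set.Icc a b with hFset_def
  set f : ℂ → ℂ := fun z => ∫ t : ℝ, ((t : ℂ) - z)⁻¹ ∂σ with hf_def
  set W : ℂ → ℂ := fun z => ∏ k, (z - (ζ k : ℂ)) with hW_def
  set H : ℂ → ℂ := fun z => z ^ j * h z with hH_def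
  set c : ℝ := (a + b) / 2 with hc_def
  set d : ℝ := (b - a) / 2 with hd_def
  set c' : ℂ := (c : ℂ) with hc'_def
  have hd0 : 0 ≤ d := by rw [hd_def]; linarith
  -- a.e. membership
  have hae : ∀ᵐ t ∂σ, t ∈ Set.Icc a b := by
    rw [MeasureTheory.ae_iff]
    exact hsupp
  -- distance facts
  have hdin : ∀ x ∈ Set.Icc a b, dist (x : ℂ) c' ≤ d := by
    intro x hx
    rw [hc'_def, Complex.isometry_ofReal.dist_eq, Real.dist_eq, abs_le]
    simp only [Set.mem_Icc] at hx
    rw [hc_def, hd_def]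
    constructor <;> linarith [hx.1, hx.2]
  have hdout : ∀ x : ℝ, x ∉ Set.Icc a b → d < dist (x : ℂ) c' := by
    intro x hx
    rw [hc'_def, Complex.isometry_ofReal.dist_eq, Real.dist_eq]
    simp only [Set.mem_Icc, not_and_or, not_le] at hx
    rw [hc_def, hd_def] at *
    rcases hx with hx | hx
    · exact lt_abs.2 (Or.inr (by linarith))
    · exact lt_abs.2 (Or.inl (by linarith))
  have hnotF : ∀ z : ℂ, d < dist z c' → z ∉ Fset := by
    intro z hz hzF
    obtain ⟨x, hx, rfl⟩ := hzF
    exact absurd (hdin x hx) (not_le.2 hz)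
  -- min/max distance of nodes
  haveI hne : Nonempty (Fin (2 * (m + 1))) := ⟨⟨0, by omega⟩⟩
  set mlo : ℝ := Finset.univ.inf' Finset.univ_nonempty (fun k => dist ((ζ k : ℝ) : ℂ) c') with hmlo_def
  have hmlo_le : ∀ k, mlo ≤ dist ((ζ k : ℝ) : ℂ) c' := fun k =>
    Finset.inf'_le _ (Finset.mem_univ k)
  have hdmlo : d < mlo := by
    rw [hmlo_def, Finset.lt_inf'_iff]
    exact fun k _ => hdout _ (hζ k)
  set Mhi : ℝ := Finset.univ.sup' Finset.univ_nonempty (fun k => dist ((ζ k : ℝ) : ℂ) c') with hMhi_def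
  have hMhi_le : ∀ k, dist ((ζ k : ℝ) : ℂ) c' ≤ Mhi := fun k => by
    rw [hMhi_def]
    exact Finset.le_sup' (fun k => dist ((ζ k : ℝ) : ℂ) c') (Finset.mem_univ k)
  have hMhi0 : 0 ≤ Mhi := by refine le_trans dist_nonneg (hMhi_le ⟨0, by omega⟩)
  set r : ℝ := (d + mlo) / 2 with hr_def
  have hdr : d < r := by rw [hr_def]; linarith
  have hrmlo : r < mlo := by rw [hr_def]; linarith
  have hr0 : 0 < r := lt_of_le_of_lt hd0 hdr
  -- triangle-type bound
  have htri : ∀ z : ℂ, ∀ k : Fin (2 * (m + 1)),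
      dist ((ζ k : ℝ) : ℂ) c' - dist z c' ≤ ‖z - ((ζ k : ℝ) : ℂ)‖ := by
    intro z k
    have h1 := dist_triangle ((ζ k : ℝ) : ℂ) z c'
    have h2 : dist ((ζ k : ℝ) : ℂ) z = ‖z - ((ζ k : ℝ) : ℂ)‖ := by
      rw [dist_comm, dist_eq_norm]
    rw [← h2]
    linarith [h1]
  -- W is nonzero on the closed ball
  have hWlb : ∀ z ∈ closedBall c' r, (mlo - r) ^ (2 * (m + 1)) ≤ ‖W z‖ := by
    intro z hz
    rw [hW_def]
    simp only
    rw [norm_prod]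
    have hbd : ∀ k ∈ (Finset.univ : Finset (Fin (2 * (m + 1)))),
        mlo - r ≤ ‖z - ((ζ k : ℝ) : ℂ)‖ := by
      intro k _
      have h1 := htri z k
      have h2 : dist z c' ≤ r := mem_closedBall.1 hz
      have h3 := hmlo_le k
      linarith
    calc (mlo - r) ^ (2 * (m + 1))
        = ∏ _k : Fin (2 * (m + 1)), (mlo - r) := by
          rw [Finset.prod_const, Finset.card_univ, Fintype.card_fin]
      _ ≤ ∏ k, ‖z - ((ζ k : ℝ) : ℂ)‖ :=
          Finset.prod_le_prod (fun k _ => by linarith) hbd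
  have hWne : ∀ z ∈ closedBall c' r, W z ≠ 0 := by
    intro z hz
    have := hWlb z hz
    have h1 : (0 : ℝ) < (mlo - r) ^ (2 * (m + 1)) := pow_pos (by linarith) _
    intro h0
    rw [h0, norm_zero] at this
    linarith
  -- H differentiable off Fset
  have hHdiff : DifferentiableOn ℂ H Fsetᶜ :=
    (differentiable_pow j).differentiableOn.mul hh
  have hFopen : IsOpen Fsetᶜ :=
    (((isCompact_Icc).image Complex.continuous_ofReal).isClosed).isOpen_compl
  -- Step A : the contour integral of H vanishes
  have hIr0 : (∮ z in C(c', r), H z) = 0 := by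
    have hconst : ∀ R : ℝ, r ≤ R → (∮ z in C(c', R), H z) = (∮ z in C(c', r), H z) := by
      intro R hR
      refine Complex.circleIntegral_eq_of_differentiable_on_annulus_off_countable hr0 hR
        Set.countable_empty ?_ ?_
      · refine hHdiff.continuousOn.mono fun z hz => ?_
        have hge : r ≤ dist z c' := not_lt.1 fun hc => hz.2 (mem_ball.2 hc)
        exact hnotF z (lt_of_lt_of_le hdr hge)
      · intro z hz
        have hgt : r < dist z c' := not_le.1 fun hc => hz.1.2 (mem_closedBall.2 hc)
        exact hHdiff.differentiableAt (hFopen.mem_nhds (hnotF z (hdr.trans hgt)))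
    obtain ⟨CQ, hCQ0, hCQ⟩ := poly_bound Q (m + 1) hQ
    have hP' : P.degree ≤ (m : WithBot ℕ) := by simpa using hP
    obtain ⟨CP, hCP0, hCP⟩ := poly_bound P m hP'
    set S : ℝ := (σ Set.univ).toReal with hS_def
    have hS0 : 0 ≤ S := ENNReal.toReal_nonneg
    set K : ℝ := (CQ * (2 * S) * 2 ^ (2 * m + 1) + CP * 2 ^ (2 * m)) * 2 ^ (2 * m + 2)
      with hK_def
    have hK0 : 0 ≤ K := by rw [hK_def]; positivity
    set R0 : ℝ := 2 * (‖c'‖ + Mhi + d + r + 1) with hR0_def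
    have hc'0 : (0:ℝ) ≤ ‖c'‖ := norm_nonneg _
    have hR0r : r ≤ R0 := by rw [hR0_def]; linarith
    have hR0pos : 0 < R0 := lt_of_lt_of_le hr0 hR0r
    have hbound : ∀ R : ℝ, R0 ≤ R → ∀ z ∈ sphere c' R, ‖H z‖ ≤ K / R ^ 2 := by
      intro R hR z hz
      rw [mem_sphere] at hz
      rw [hR0_def] at hR
      have hRpos : 0 < R := lt_of_lt_of_le hR0pos (by rw [hR0_def]; exact hR)
      have hzF : z ∉ Fset := hnotF z (by rw [hz]; linarith)
      have hdistzc : ‖z - c'‖ = R := by rw [← dist_eq_norm, hz]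
      have hzn1 : 1 ≤ ‖z‖ := by
        have h1 : ‖z - c'‖ ≤ ‖z‖ + ‖c'‖ := norm_sub_le z c'
        linarith
      have hzn2 : ‖z‖ ≤ 2 * R := by
        have h1 : ‖z‖ ≤ ‖z - c'‖ + ‖c'‖ := by
          calc ‖z‖ = ‖z - c' + c'‖ := by ring_nf
            _ ≤ ‖z - c'‖ + ‖c'‖ := norm_add_le _ _
        linarith
      -- lower bound on W
      have hWz : (R / 2) ^ (2 * (m + 1)) ≤ ‖W z‖ := by
        rw [hW_def]
        simp only
        rw [norm_prod]
        have hbd : ∀ k ∈ (Finset.univ : Finset (Fin (2 * (m + 1)))),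
            R / 2 ≤ ‖z - ((ζ k : ℝ) : ℂ)‖ := by
          intro k _
          have h1 := dist_triangle z ((ζ k : ℝ) : ℂ) c'
          have h2 := hMhi_le k
          have h3 : dist z ((ζ k : ℝ) : ℂ) = ‖z - ((ζ k : ℝ) : ℂ)‖ := dist_eq_norm _ _
          rw [h3] at h1
          rw [hz] at h1
          linarith
        calc (R / 2) ^ (2 * (m + 1))
            = ∏ _k : Fin (2 * (m + 1)), (R / 2) := by
              rw [Finset.prod_const, Finset.card_univ, Fintype.card_fin]
          _ ≤ ∏ k, ‖z - ((ζ k : ℝ) : ℂ)‖ :=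
              Finset.prod_le_prod (fun k _ => by linarith) hbd
      have hWz0 : W z ≠ 0 := by
        intro h0
        have h1 : (0:ℝ) < (R / 2) ^ (2 * (m + 1)) := by positivity
        rw [h0, norm_zero] at hWz
        linarith
      -- bound on f
      have hfz : ‖f z‖ ≤ (R / 2)⁻¹ * S := by
        rw [hf_def]
        simp only
        rw [hS_def]
        refine MeasureTheory.norm_integral_le_of_norm_le_const ?_
        filter_upwards [hae] with t ht
        have hd1 : dist ((t : ℝ) : ℂ) c' ≤ d := hdin t ht
        have hd2 : R / 2 ≤ ‖(t : ℂ) - z‖ := by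
          have h1 := dist_triangle z ((t : ℝ) : ℂ) c'
          have h3 : dist z ((t : ℝ) : ℂ) = ‖(t : ℂ) - z‖ := by
            rw [dist_comm, dist_eq_norm]
          rw [h3, hz] at h1
          linarith
        rw [norm_inv]
        exact inv_anti₀ (by positivity) hd2
      -- polynomial bounds
      have h2R1 : (1:ℝ) ≤ 2 * R := by linarith
      have hQz : ‖Q.eval z‖ ≤ CQ * (2 * R) ^ (m + 1) :=
        le_trans (hCQ z hzn1) (mul_le_mul_of_nonneg_left
          (pow_le_pow_left₀ (norm_nonneg _) hzn2 _) hCQ0)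
      have hPz : ‖P.eval z‖ ≤ CP * (2 * R) ^ m :=
        le_trans (hCP z hzn1) (mul_le_mul_of_nonneg_left
          (pow_le_pow_left₀ (norm_nonneg _) hzn2 _) hCP0)
      have hzj : ‖z‖ ^ j ≤ (2 * R) ^ m :=
        le_trans (pow_le_pow_left₀ (norm_nonneg z) hzn2 j) (pow_le_pow_right₀ h2R1 hjm)
      -- rewrite H z
      have h1 : Q.eval z * f z - P.eval z = W z * h z := heq z hzF
      have h2 : H z = z ^ j * ((Q.eval z * f z - P.eval z) / W z) := by
        rw [hH_def]
        simp only
        rw [h1, mul_div_cancel_left₀ _ hWz0]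
      rw [h2, norm_mul, norm_div, norm_pow]
      have hnum : ‖Q.eval z * f z - P.eval z‖
          ≤ CQ * (2 * R) ^ (m + 1) * ((R / 2)⁻¹ * S) + CP * (2 * R) ^ m := by
        refine le_trans (norm_sub_le _ _) ?_
        have hm1 : ‖Q.eval z * f z‖ ≤ CQ * (2 * R) ^ (m + 1) * ((R / 2)⁻¹ * S) := by
          rw [norm_mul]
          exact mul_le_mul hQz hfz (norm_nonneg _) (by positivity)
        linarith [hPz]
      have hWzpos : (0:ℝ) < ‖W z‖ := lt_of_lt_of_le (by positivity) hWz
      calc ‖z‖ ^ j * (‖Q.eval z * f z - P.eval z‖ / ‖W z‖)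
          ≤ (2 * R) ^ m * ((CQ * (2 * R) ^ (m + 1) * ((R / 2)⁻¹ * S) + CP * (2 * R) ^ m)
            / ((R / 2) ^ (2 * (m + 1)))) := by
            have hdiv : ‖Q.eval z * f z - P.eval z‖ / ‖W z‖
                ≤ (CQ * (2 * R) ^ (m + 1) * ((R / 2)⁻¹ * S) + CP * (2 * R) ^ m)
                  / ((R / 2) ^ (2 * (m + 1))) :=
              div_le_div₀ (by positivity) hnum (by positivity) hWz
            exact mul_le_mul hzj hdiv (by positivity) (by positivity)
        _ = K / R ^ 2 := by
            rw [hK_def]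
            have hRne : R ≠ 0 := ne_of_gt hRpos
            field_simp
            have h22 : ((1:ℝ)/2)^(m*2) * 2^(m*2) = 1 := by rw [← mul_pow]; norm_num
            linear_combination (-(R^2*R^(m*2)*(4*CQ*S+CP)*2^(m*2))) * h22
    -- limit argument
    have hIR : ∀ R : ℝ, R0 ≤ R → ‖(∮ z in C(c', r), H z)‖ ≤ 2 * Real.pi * R * (K / R ^ 2) := by
      intro R hR
      rw [← hconst R (le_trans hR0r hR)]
      exact circleIntegral.norm_integral_le_of_norm_le_const
        (le_trans hR0pos.le hR) (hbound R hR)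
    have hlim : Tendsto (fun R : ℝ => 2 * Real.pi * R * (K / R ^ 2)) atTop (nhds 0) := by
      have hev : (fun R : ℝ => 2 * Real.pi * R * (K / R ^ 2))
          =ᶠ[atTop] fun R : ℝ => (2 * Real.pi * K) / R := by
        filter_upwards [eventually_gt_atTop (0:ℝ)] with R hR
        field_simp
      rw [Filter.tendsto_congr' hev]
      exact Tendsto.div_atTop tendsto_const_nhds tendsto_id
    have hle0 : ‖(∮ z in C(c', r), H z)‖ ≤ 0 := by
      refine ge_of_tendsto hlim ?_
      filter_upwards [eventually_ge_atTop R0] with R hR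
      exact hIR R hR
    exact norm_le_zero_iff.1 hle0
  -- Step B
  set g : ℂ → ℂ := fun z => z ^ j * Q.eval z / W z with hg_def
  set pj : ℂ → ℂ := fun z => z ^ j * P.eval z / W z with hpj_def
  have hWdiff : Differentiable ℂ W := by
    have : W = fun z => (∏ k, (X - C ((ζ k : ℝ) : ℂ))).eval z := by
      funext z; simp [hW_def, Polynomial.eval_prod]
    rw [this]; exact Polynomial.differentiable _
  have hgdiff : DifferentiableOn ℂ g (closedBall c' r) := by
    intro z hz
    exact (((differentiable_pow j).differentiableAt.mul Q.differentiableAt).div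
      (hWdiff z) (hWne z hz)).differentiableWithinAt
  have hpjdiff : DifferentiableOn ℂ pj (closedBall c' r) := by
    intro z hz
    exact (((differentiable_pow j).differentiableAt.mul P.differentiableAt).div
      (hWdiff z) (hWne z hz)).differentiableWithinAt
  have hsphere_sub : sphere c' r ⊆ Fsetᶜ := by
    intro z hz
    exact hnotF z (by rw [mem_sphere] at hz; rw [hz]; exact hdr)
  -- split the integral
  have hEq : Set.EqOn H (fun z => g z * f z - pj z) (sphere c' r) := by
    intro z hz
    have hzF : z ∈ Fsetᶜ := hsphere_sub hz
    have h1 : Q.eval z * f z - P.eval z = W z * h z := heq z hzF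
    have h2 : W z ≠ 0 := hWne z (sphere_subset_closedBall hz)
    have h3 : h z = (Q.eval z * f z - P.eval z) / W z := by
      rw [h1, mul_div_cancel_left₀ _ h2]
    show H z = g z * f z - pj z
    rw [hH_def, hg_def, hpj_def]
    simp only
    rw [h3]
    field_simp
  have hpj0 : (∮ z in C(c', r), pj z) = 0 := by
    refine Complex.circleIntegral_eq_zero_of_differentiable_on_off_countable hr0.le
      Set.countable_empty hpjdiff.continuousOn fun z hz => ?_
    exact ((differentiable_pow j).differentiableAt.mul P.differentiableAt).div
      (hWdiff z) (hWne z (ball_subset_closedBall hz.1))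
  have hHint : CircleIntegrable H c' r :=
    ContinuousOn.circleIntegrable hr0.le (hHdiff.continuousOn.mono hsphere_sub)
  have hpjint : CircleIntegrable pj c' r :=
    ContinuousOn.circleIntegrable hr0.le (hpjdiff.continuousOn.mono sphere_subset_closedBall)
  have hgfint : CircleIntegrable (fun z => g z * f z) c' r := by
    have h4 := hHint.add hpjint
    unfold CircleIntegrable at h4 ⊢
    have h5 : (fun θ : ℝ => (fun z => g z * f z) (circleMap c' r θ))
        = fun θ : ℝ => (H + pj) (circleMap c' r θ) := by
      funext θ
      have h6 := hEq (circleMap_mem_sphere c' hr0.le θ)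
      simp only [Pi.add_apply]
      rw [h6]
      ring
    rw [h5]
    exact h4
  have hsplit : (∮ z in C(c', r), H z)
      = (∮ z in C(c', r), g z * f z) - (∮ z in C(c', r), pj z) := by
    rw [circleIntegral.integral_congr hr0.le hEq]
    exact circleIntegral.integral_sub hgfint hpjint
  -- Fubini step
  have hgf : (∮ z in C(c', r), g z * f z) = (-(2 * Real.pi * Complex.I)) * ∫ t : ℝ, g t ∂σ := by
    set A : ℝ → ℂ := fun θ => circleMap 0 r θ * Complex.I * g (circleMap c' r θ) with hA_def
    set Φ : ℝ → ℝ → ℂ := fun θ t => A θ * (((t : ℝ) : ℂ) - circleMap c' r θ)⁻¹ with hΦ_def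
    have hgcont : ContinuousOn g (closedBall c' r) := hgdiff.continuousOn
    have hAcont : Continuous A := by
      refine Continuous.mul ?_ ?_
      · exact (continuous_circleMap 0 r).mul continuous_const
      · exact hgcont.comp_continuous (continuous_circleMap c' r)
          (fun θ => sphere_subset_closedBall (circleMap_mem_sphere c' hr0.le θ))
    -- step 1
    have hstep1 : (∮ z in C(c', r), g z * f z)
        = ∫ θ in (0:ℝ)..(2 * Real.pi), ∫ t : ℝ, Φ θ t ∂σ := by
      rw [circleIntegral]
      refine intervalIntegral.integral_congr fun θ _ => ?_
      rw [deriv_circleMap, smul_eq_mul]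
      have hrhs : (∫ t : ℝ, Φ θ t ∂σ) = A θ * f (circleMap c' r θ) := by
        rw [hΦ_def, hf_def]
        simp only
        exact MeasureTheory.integral_const_mul _ _
      rw [hrhs, hA_def]
      ring
    -- finite restricted measure
    haveI hfin : IsFiniteMeasure (volume.restrict (Set.Ioc (0:ℝ) (2 * Real.pi))) :=
      ⟨by rw [Measure.restrict_apply_univ]; exact measure_Ioc_lt_top⟩
    -- integrability on product
    obtain ⟨CA, hCA⟩ := (isCompact_Icc (a := (0:ℝ)) (b := 2 * Real.pi)).exists_bound_of_continuousOn
      hAcont.continuousOn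
    have hCA0 : 0 ≤ CA := le_trans (norm_nonneg _) (hCA 0 (Set.left_mem_Icc.2 Real.two_pi_pos.le))
    have hInt : Integrable (Function.uncurry Φ)
        ((volume.restrict (Set.Ioc (0:ℝ) (2 * Real.pi))).prod σ) := by
      refine Integrable.mono' (integrable_const (CA * (r - d)⁻¹)) ?_ ?_
      · apply Measurable.aestronglyMeasurable
        have hu : Function.uncurry Φ
            = fun p : ℝ × ℝ => A p.1 * (((p.2 : ℝ) : ℂ) - circleMap c' r p.1)⁻¹ := rfl
        rw [hu]
        refine Measurable.mul ?_ ?_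
        · exact (hAcont.comp continuous_fst).measurable
        · refine Measurable.inv ?_
          exact ((Complex.continuous_ofReal.comp continuous_snd).sub
            ((continuous_circleMap c' r).comp continuous_fst)).measurable
      · have h1 : ∀ᵐ p : ℝ × ℝ ∂((volume.restrict (Set.Ioc (0:ℝ) (2 * Real.pi))).prod σ),
            p.2 ∈ Set.Icc a b := by
          rw [MeasureTheory.ae_iff]
          have hset : {p : ℝ × ℝ | ¬ p.2 ∈ Set.Icc a b} = Set.univ ×ˢ (Set.Icc a b)ᶜ := by
            ext p; simp
          rw [hset, Measure.prod_prod, hsupp, mul_zero]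
        have h2 : ∀ᵐ p : ℝ × ℝ ∂((volume.restrict (Set.Ioc (0:ℝ) (2 * Real.pi))).prod σ),
            p.1 ∈ Set.Ioc (0:ℝ) (2 * Real.pi) := by
          rw [MeasureTheory.ae_iff]
          have hset : {p : ℝ × ℝ | ¬ p.1 ∈ Set.Ioc (0:ℝ) (2 * Real.pi)}
              = (Set.Ioc (0:ℝ) (2 * Real.pi))ᶜ ×ˢ (Set.univ : Set ℝ) := by
            ext p; simp
          rw [hset, Measure.prod_prod, Measure.restrict_apply measurableSet_Ioc.compl]
          simp
        filter_upwards [h1, h2] with p hp1 hp2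
        have hb1 : ‖A p.1‖ ≤ CA := hCA _ (Set.Ioc_subset_Icc_self hp2)
        have hb2 : r - d ≤ ‖((p.2 : ℝ) : ℂ) - circleMap c' r p.1‖ := by
          have hd1 : dist ((p.2 : ℝ) : ℂ) c' ≤ d := hdin _ hp1
          have hd2 : dist (circleMap c' r p.1) c' = r :=
            mem_sphere.1 (circleMap_mem_sphere c' hr0.le p.1)
          have h3 := dist_triangle (circleMap c' r p.1) ((p.2 : ℝ) : ℂ) c'
          have h4 : dist (circleMap c' r p.1) ((p.2 : ℝ) : ℂ)
              = ‖((p.2 : ℝ) : ℂ) - circleMap c' r p.1‖ := by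
            rw [dist_comm, dist_eq_norm]
          rw [h4, hd2] at h3
          linarith
        calc ‖Φ p.1 p.2‖
            = ‖A p.1‖ * ‖(((p.2 : ℝ) : ℂ) - circleMap c' r p.1)⁻¹‖ := norm_mul _ _
          _ ≤ CA * (r - d)⁻¹ := by
              rw [norm_inv]
              exact mul_le_mul hb1 (inv_anti₀ (by linarith) hb2) (by positivity) hCA0
    have hswap := MeasureTheory.integral_integral_swap hInt
    -- inner integral via Cauchy formula
    have hneg : ∀ F : ℂ → ℂ, (∮ z in C(c', r), -(F z)) = -∮ z in C(c', r), F z := by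
      intro F
      simp [circleIntegral, smul_neg, intervalIntegral.integral_neg]
    have hinner : ∀ᵐ t ∂σ, (∫ θ in Set.Ioc (0:ℝ) (2 * Real.pi), Φ θ t)
        = (-(2 * Real.pi * Complex.I)) * g ((t : ℝ) : ℂ) := by
      filter_upwards [hae] with t ht
      have hball : ((t : ℝ) : ℂ) ∈ ball c' r :=
        mem_ball.2 (lt_of_le_of_lt (hdin t ht) hdr)
      have hC : (∮ z in C(c', r), (z - ((t : ℝ) : ℂ))⁻¹ • g z)
          = (2 * Real.pi * Complex.I : ℂ) • g ((t : ℝ) : ℂ) :=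
        hgdiff.circleIntegral_sub_inv_smul hball
      have hrw : (∫ θ in Set.Ioc (0:ℝ) (2 * Real.pi), Φ θ t)
          = ∮ z in C(c', r), -((z - ((t : ℝ) : ℂ))⁻¹ • g z) := by
        rw [circleIntegral, intervalIntegral.integral_of_le Real.two_pi_pos.le]
        have hfn : (fun θ : ℝ => Φ θ t)
            = fun θ : ℝ => deriv (circleMap c' r) θ •
              -((circleMap c' r θ - ((t : ℝ) : ℂ))⁻¹ • g (circleMap c' r θ)) := by
          funext θ
          rw [deriv_circleMap, smul_eq_mul, smul_eq_mul, hΦ_def, hA_def]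
          simp only
          have hzt : ((t : ℝ) : ℂ) ≠ circleMap c' r θ := by
            intro hcontra
            have hx1 : dist ((t : ℝ) : ℂ) c' = r := by
              rw [hcontra]; exact mem_sphere.1 (circleMap_mem_sphere c' hr0.le θ)
            have hx2 : dist ((t : ℝ) : ℂ) c' ≤ d := hdin t ht
            linarith
          have hinv : (((t : ℝ) : ℂ) - circleMap c' r θ)⁻¹
              = -((circleMap c' r θ - ((t : ℝ) : ℂ))⁻¹) := by
            rw [← inv_neg]
            ring_nf
          rw [hinv]
          ring
        rw [hfn]
      rw [hrw, hneg, hC, smul_eq_mul]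
      ring
    rw [hstep1, intervalIntegral.integral_of_le Real.two_pi_pos.le, hswap,
      MeasureTheory.integral_congr_ae hinner, MeasureTheory.integral_const_mul]
  -- conclusion
  have hint0 : ∫ t : ℝ, g t ∂σ = 0 := by
    have := hsplit
    rw [hIr0, hpj0, hgf, sub_zero] at this
    have h2pi : (-(2 * Real.pi * Complex.I)) ≠ 0 := by
      simp [Real.pi_ne_zero, Complex.I_ne_zero]
    rcases mul_eq_zero.1 this.symm with h0 | h0
    · exact absurd h0 h2pi
    · exact h0
  rw [show (fun t : ℝ => Q.eval (t:ℂ) * (t:ℂ) ^ j / (∏ k, ((t:ℂ) - (ζ k : ℂ)))) = fun t : ℝ => g t by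
    funext t; rw [hg_def, hW_def]; ring]
  exact hint0
end

section
/- (Zeros of the interpolation error) Under the hypotheses of the Hermite interpolation formula — σ a finite positive Borel measure with infinite support contained in a compact interval F, f(z) := ∫ dσ(t)/(t − z), real nodes ζ_1, …, ζ_{2n} ∉ F, W(z) := ∏_{k=1}^{2n}(z − ζ_k), P, Q polynomials with deg P ≤ n − 1, deg Q ≤ n, Q ≢ 0, and (Qf − P)/W extending analytically to ℂ \ F — for every real x ∉ F one has f(x) − P(x)/Q(x) = 0 if and only if W(x) = 0; that is, on ℝ \ F the error vanishes exactly at the interpolation nodes. -/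
open Polynomial Filter MeasureTheory Finset Topology


/-- The (topological) support of a measure `σ` on `ℝ`. -/
def msupport (σ : Measure ℝ) : Set ℝ := {x | ∀ U ∈ nhds x, σ U ≠ 0}

lemma hermAux_ae_mem (σ : Measure ℝ) (a b : ℝ) (hsupp : σ (Set.Icc a b)ᶜ = 0) :
    ∀ᵐ t ∂σ, t ∈ Set.Icc a b := by
  rw [MeasureTheory.ae_iff]
  convert hsupp using 2
  rfl

lemma hermAux_msupport_subset (σ : Measure ℝ) (Z : Set ℝ) (hZ : IsClosed Z)
    (h0 : σ Zᶜ = 0) : msupport σ ⊆ Z := by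
  intro x hx
  by_contra hxZ
  exact hx Zᶜ (hZ.isOpen_compl.mem_nhds hxZ) h0

lemma hermAux_integrable {E : Type*} [NormedAddCommGroup E]
    (σ : Measure ℝ) [IsFiniteMeasure σ] (a b : ℝ) (hsupp : σ (Set.Icc a b)ᶜ = 0)
    (g : ℝ → E) (hm : AEStronglyMeasurable g σ) (hc : ContinuousOn g (Set.Icc a b)) :
    Integrable g σ := by
  obtain ⟨M, hM⟩ := isCompact_Icc.exists_bound_of_continuousOn hc
  refine Integrable.mono' (integrable_const M) hm ?_
  filter_upwards [hermAux_ae_mem σ a b hsupp] with t ht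
  exact hM t ht

lemma hermAux_sign (a b : ℝ) (hab : a ≤ b) (v : ℝ → ℝ)
    (hc : ContinuousOn v (Set.Icc a b))
    (h0 : ∀ t ∈ Set.Icc a b, v t ≠ 0) :
    (∀ t ∈ Set.Icc a b, 0 < v t) ∨ (∀ t ∈ Set.Icc a b, v t < 0) := by
  by_contra hcon
  push_neg at hcon
  obtain ⟨⟨t₁, ht₁, ht₁'⟩, ⟨t₂, ht₂, ht₂'⟩⟩ := hcon
  have h1 : v t₁ < 0 := lt_of_le_of_ne ht₁' (h0 t₁ ht₁)
  have h2 : 0 < v t₂ := lt_of_le_of_ne ht₂' (Ne.symm (h0 t₂ ht₂))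
  have hI : Set.uIcc a b = Set.Icc a b := Set.uIcc_of_le hab
  have hsub : Set.uIcc t₁ t₂ ⊆ Set.Icc a b := by
    rw [← hI]; exact Set.uIcc_subset_uIcc (hI ▸ ht₁) (hI ▸ ht₂)
  have h0' : (0:ℝ) ∈ Set.uIcc (v t₁) (v t₂) :=
    Set.mem_uIcc.2 (Or.inl ⟨le_of_lt h1, le_of_lt h2⟩)
  obtain ⟨t₀, ht₀, hvt₀⟩ := intermediate_value_uIcc (hc.mono hsub) h0'
  exact h0 t₀ (hsub ht₀) hvt₀

lemma hermAux_extract {ι : Type*} (Ω : Set ℂ) (hΩ : IsOpen Ω) (G : ℂ → ℂ)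
    (hG : ContinuousOn G Ω) (ζ : ι → ℂ) (s : Finset ι) (hζ : ∀ k ∈ s, ζ k ∈ Ω) :
    ∀ D : Polynomial ℂ, (∀ z ∈ Ω, D.eval z = (∏ k ∈ s, (z - ζ k)) * G z) →
    ∃ E : Polynomial ℂ, D = (∏ k ∈ s, (X - C (ζ k))) * E ∧ ∀ z ∈ Ω, E.eval z = G z := by
  classical
  induction s using Finset.induction_on with
  | empty => intro D hD; exact ⟨D, by simp, by simpa using hD⟩
  | @insert k s hk ih =>
    intro D hD
    have hkΩ : ζ k ∈ Ω := hζ k (Finset.mem_insert_self k s)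
    have hroot : D.eval (ζ k) = 0 := by
      rw [hD (ζ k) hkΩ, Finset.prod_insert hk]
      simp
    obtain ⟨D₁, hD₁⟩ := (dvd_iff_isRoot.2 hroot)
    have hoff : ∀ z ∈ Ω, z ≠ ζ k → D₁.eval z = (∏ j ∈ s, (z - ζ j)) * G z := by
      intro z hz hne
      have h2 := hD z hz
      rw [hD₁, Finset.prod_insert hk] at h2
      simp only [eval_mul, eval_sub, eval_X, eval_C] at h2
      have h1 : (z - ζ k) * D₁.eval z = (z - ζ k) * ((∏ j ∈ s, (z - ζ j)) * G z) := by
        linear_combination h2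
      exact mul_left_cancel₀ (sub_ne_zero.2 hne) h1
    have hD₁' : ∀ z ∈ Ω, D₁.eval z = (∏ j ∈ s, (z - ζ j)) * G z := by
      intro z hz
      rcases eq_or_ne z (ζ k) with hzk | hne
      · have hne' : (𝓝[{ζ k}ᶜ] (ζ k)).NeBot := Module.punctured_nhds_neBot ℂ ℂ (ζ k)
        have hmem : Ω ∈ 𝓝 (ζ k) := hΩ.mem_nhds hkΩ
        have hF1 : Filter.Tendsto (fun w => D₁.eval w) (𝓝[{ζ k}ᶜ] (ζ k)) (𝓝 (D₁.eval (ζ k))) :=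
          (D₁.continuous_aeval.tendsto (ζ k)).mono_left nhdsWithin_le_nhds
        have hF2 : Filter.Tendsto (fun w => (∏ j ∈ s, (w - ζ j)) * G w) (𝓝[{ζ k}ᶜ] (ζ k))
            (𝓝 ((∏ j ∈ s, (ζ k - ζ j)) * G (ζ k))) := by
          apply Filter.Tendsto.mul
          · exact (tendsto_finset_prod _ fun j _ =>
              (continuous_id.sub continuous_const).tendsto (ζ k)).mono_left nhdsWithin_le_nhds
          · exact ((hG.continuousAt hmem).tendsto).mono_left nhdsWithin_le_nhds
        have heqev : ∀ᶠ w in 𝓝[{ζ k}ᶜ] (ζ k), D₁.eval w = (∏ j ∈ s, (w - ζ j)) * G w := by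
          have hev : ∀ᶠ w in 𝓝[{ζ k}ᶜ] (ζ k), w ∈ Ω ∧ w ≠ ζ k := by
            filter_upwards [nhdsWithin_le_nhds hmem, self_mem_nhdsWithin] with w h1 h2
            exact ⟨h1, h2⟩
          filter_upwards [hev] with w hw
          exact hoff w hw.1 hw.2
        rw [hzk]
        exact tendsto_nhds_unique (hF1.congr' heqev) hF2
      · exact hoff z hz hne
    obtain ⟨E, hE1, hE2⟩ := ih (fun j hj => hζ j (Finset.mem_insert_of_mem hj)) D₁ hD₁'
    exact ⟨E, by rw [hD₁, hE1, Finset.prod_insert hk, mul_assoc], hE2⟩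

lemma hermAux_geom (R : Polynomial ℂ) (N : ℕ) (hR : R.natDegree < N + 1) (z t : ℂ) :
    (z - t) * (∑ j ∈ range (N+1), R.coeff j * ∑ i ∈ range j, z ^ i * t ^ (j-1-i)) =
      R.eval z - R.eval t := by
  rw [Finset.mul_sum]
  have : ∀ j ∈ range (N+1), (z - t) * (R.coeff j * ∑ i ∈ range j, z ^ i * t ^ (j-1-i))
      = R.coeff j * z ^ j - R.coeff j * t ^ j := by
    intro j _
    have hg := geom_sum₂_mul z t j
    calc (z - t) * (R.coeff j * ∑ i ∈ range j, z ^ i * t ^ (j-1-i))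
        = R.coeff j * ((∑ i ∈ range j, z ^ i * t ^ (j-1-i)) * (z - t)) := by ring
      _ = R.coeff j * (z ^ j - t ^ j) := by rw [hg]
      _ = R.coeff j * z ^ j - R.coeff j * t ^ j := by ring
  rw [Finset.sum_congr rfl this, Finset.sum_sub_distrib,
    ← eval_eq_sum_range' hR, ← eval_eq_sum_range' hR]

noncomputable def hermDpoly (R : Polynomial ℂ) (ν : ℕ → ℂ) (N : ℕ) : Polynomial ℂ :=
  ∑ j ∈ range (N+1), ∑ i ∈ range j, C (R.coeff j * ν (j-1-i)) * X ^ i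

lemma hermDpoly_eval (R : Polynomial ℂ) (ν : ℕ → ℂ) (N : ℕ) (z : ℂ) :
    (hermDpoly R ν N).eval z
      = ∑ j ∈ range (N+1), ∑ i ∈ range j, (R.coeff j * ν (j-1-i)) * z ^ i := by
  simp [hermDpoly, eval_finset_sum]

lemma hermDpoly_coeff (R : Polynomial ℂ) (ν : ℕ → ℂ) (N : ℕ) (m : ℕ) :
    (hermDpoly R ν N).coeff m
      = ∑ j ∈ range (N+1), if m < j then R.coeff j * ν (j-1-m) else 0 := by
  rw [hermDpoly, finset_sum_coeff]
  refine Finset.sum_congr rfl fun j _ => ?_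
  rw [finset_sum_coeff]
  simp only [coeff_C_mul, coeff_X_pow]
  rw [Finset.sum_congr rfl (fun i _ => by rw [mul_ite, mul_one, mul_zero])]
  simp only [eq_comm (a := m)]
  rw [Finset.sum_ite_eq' (range j) m (fun i => R.coeff j * ν (j-1-i))]
  simp [Finset.mem_range]

lemma hermDpoly_coeff_zero (R : Polynomial ℂ) (ν : ℕ → ℂ) (N : ℕ) (m : ℕ) (hm : N ≤ m) :
    (hermDpoly R ν N).coeff m = 0 := by
  rw [hermDpoly_coeff]
  refine Finset.sum_eq_zero fun j hj => ?_
  rw [Finset.mem_range] at hj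
  rw [if_neg]
  omega

lemma hermDpoly_degree (R : Polynomial ℂ) (ν : ℕ → ℂ) (N : ℕ) :
    (hermDpoly R ν N).degree < (N : WithBot ℕ) ∨ N = 0 := by
  rcases Nat.eq_zero_or_pos N with h | h
  · right; exact h
  · left
    rw [degree_lt_iff_coeff_zero]
    exact fun m hm => hermDpoly_coeff_zero R ν N m (by exact_mod_cast hm)

lemma hermAux_dpoly_int (σ : Measure ℝ) [IsFiniteMeasure σ] (R : Polynomial ℂ) (N : ℕ)
    (r : ℝ → ℂ) (hri : ∀ m : ℕ, Integrable (fun t => r t * (t:ℂ)^m) σ) (z : ℂ) :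
    (hermDpoly R (fun m => ∫ t, r t * (t:ℂ)^m ∂σ) N).eval z
      = ∫ t, r t * (∑ j ∈ range (N+1), R.coeff j *
          ∑ i ∈ range j, z ^ i * ((t:ℂ)) ^ (j-1-i)) ∂σ := by
  have hfun : ∀ t : ℝ, r t * (∑ j ∈ range (N+1), R.coeff j *
      ∑ i ∈ range j, z ^ i * ((t:ℂ)) ^ (j-1-i))
      = ∑ j ∈ range (N+1), ∑ i ∈ range j, (R.coeff j * z ^ i) * (r t * (t:ℂ) ^ (j-1-i)) := by
    intro t
    rw [Finset.mul_sum]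
    refine Finset.sum_congr rfl fun j _ => ?_
    rw [← mul_assoc, Finset.mul_sum]
    refine Finset.sum_congr rfl fun i _ => ?_
    ring
  simp_rw [hfun]
  have hint1 : ∀ j i : ℕ, Integrable (fun t => (R.coeff j * z ^ i) * (r t * (t:ℂ) ^ (j-1-i))) σ :=
    fun j i => (hri (j-1-i)).const_mul _
  rw [integral_finset_sum _ (fun j _ => integrable_finset_sum _ (fun i _ => hint1 j i))]
  rw [hermDpoly_eval]
  refine Finset.sum_congr rfl fun j _ => ?_
  rw [integral_finset_sum _ (fun i _ => hint1 j i)]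
  refine Finset.sum_congr rfl fun i _ => ?_
  rw [integral_const_mul]
  ring

lemma hermAux_step (σ : Measure ℝ) [IsFiniteMeasure σ] (a b : ℝ)
    (hsupp : σ (Set.Icc a b)ᶜ = 0)
    (R : Polynomial ℂ) (N : ℕ) (hR : R.natDegree < N + 1)
    (r : ℝ → ℂ) (hrm : Measurable r) (hrc : ContinuousOn r (Set.Icc a b))
    (z : ℂ) (hz : ∀ t ∈ Set.Icc a b, (t:ℂ) - z ≠ 0) :
    R.eval z * (∫ t, r t * ((t:ℂ) - z)⁻¹ ∂σ)
      = (∫ t, r t * R.eval (t:ℂ) * ((t:ℂ) - z)⁻¹ ∂σ)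
        - (hermDpoly R (fun m => ∫ t, r t * (t:ℂ)^m ∂σ) N).eval z := by
  have hmpow : ∀ m : ℕ, Measurable (fun t : ℝ => ((t:ℂ))^m) :=
    fun m => (Complex.continuous_ofReal.pow m).measurable
  have hri : ∀ m : ℕ, Integrable (fun t => r t * (t:ℂ)^m) σ := fun m =>
    hermAux_integrable σ a b hsupp _ (hrm.mul (hmpow m)).aestronglyMeasurable
      (hrc.mul ((Complex.continuous_ofReal.pow m).continuousOn))
  have hRcont : Continuous (fun t : ℝ => R.eval (t:ℂ)) :=
    R.continuous_aeval.comp Complex.continuous_ofReal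
  have hinvm : Measurable (fun t : ℝ => ((t:ℂ) - z)⁻¹) :=
    ((Complex.continuous_ofReal.sub continuous_const).measurable).inv
  have hinvc : ContinuousOn (fun t : ℝ => ((t:ℂ) - z)⁻¹) (Set.Icc a b) :=
    ((Complex.continuous_ofReal.sub continuous_const).continuousOn).inv₀ hz
  have hSqc : Continuous (fun t : ℝ => ∑ j ∈ range (N+1), R.coeff j *
      ∑ i ∈ range j, z ^ i * ((t:ℂ)) ^ (j-1-i)) :=
    continuous_finset_sum _ fun j _ => continuous_const.mul
      (continuous_finset_sum _ fun i _ => continuous_const.mul (Complex.continuous_ofReal.pow _))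
  have h1 : Integrable (fun t => r t * R.eval (t:ℂ) * ((t:ℂ) - z)⁻¹) σ :=
    hermAux_integrable σ a b hsupp _
      ((hrm.mul hRcont.measurable).mul hinvm).aestronglyMeasurable
      ((hrc.mul hRcont.continuousOn).mul hinvc)
  have h2 : Integrable (fun t => r t * (∑ j ∈ range (N+1), R.coeff j *
      ∑ i ∈ range j, z ^ i * ((t:ℂ)) ^ (j-1-i))) σ :=
    hermAux_integrable σ a b hsupp _ (hrm.mul hSqc.measurable).aestronglyMeasurable
      (hrc.mul hSqc.continuousOn)
  rw [hermAux_dpoly_int σ R N r hri z, ← integral_const_mul, ← integral_sub h1 h2]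
  apply integral_congr_ae
  filter_upwards [hermAux_ae_mem σ a b hsupp] with t ht
  have hne := hz t ht
  have hinv : ((t:ℂ) - z) * ((t:ℂ) - z)⁻¹ = 1 := mul_inv_cancel₀ hne
  have hg := hermAux_geom R N hR z (t:ℂ)
  set Sq := ∑ j ∈ range (N+1), R.coeff j * ∑ i ∈ range j, z ^ i * ((t:ℂ)) ^ (j-1-i) with hSq
  linear_combination (-(r t * ((t:ℂ) - z)⁻¹)) * hg + (-(r t * Sq)) * hinv
lemma hermAux_cont_u (σ : Measure ℝ) [IsFiniteMeasure σ] (a b : ℝ)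
    (hsupp : σ (Set.Icc a b)ᶜ = 0) (ρ : ℝ → ℂ) (hm : Measurable ρ)
    (hc : ContinuousOn ρ (Set.Icc a b)) :
    ContinuousOn (fun z => ∫ t, ρ t * ((t : ℂ) - z)⁻¹ ∂σ)
      ((fun x : ℝ => (x : ℂ)) '' Set.Icc a b)ᶜ := by
  set F' : Set ℂ := (fun x : ℝ => (x : ℂ)) '' Set.Icc a b with hF'
  have hΩ : IsOpen F'ᶜ := (isCompact_Icc.image Complex.continuous_ofReal).isClosed.isOpen_compl
  intro z₀ hz₀
  apply ContinuousAt.continuousWithinAt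
  obtain ⟨ε, hε, hball⟩ := Metric.isOpen_iff.1 hΩ z₀ hz₀
  apply continuousAt_of_dominated (bound := fun t => ‖ρ t‖ * (ε/2)⁻¹)
  · filter_upwards with z
    exact (hm.mul ((Complex.continuous_ofReal.sub continuous_const).measurable.inv)).aestronglyMeasurable
  · filter_upwards [Metric.ball_mem_nhds z₀ (by linarith : (0:ℝ) < ε/2)] with z hz
    filter_upwards [hermAux_ae_mem σ a b hsupp] with t ht
    rw [norm_mul]
    refine mul_le_mul_of_nonneg_left ?_ (norm_nonneg _)
    rw [norm_inv]
    refine inv_anti₀ (by linarith) ?_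
    by_contra hlt
    push_neg at hlt
    have htb : (t:ℂ) ∈ Metric.ball z₀ ε := by
      have h1 : dist (t:ℂ) z < ε/2 := by rwa [dist_eq_norm]
      have h2 : dist z z₀ < ε/2 := hz
      calc dist (t:ℂ) z₀ ≤ dist (t:ℂ) z + dist z z₀ := dist_triangle _ _ _
        _ < ε := by linarith
    exact (hball htb) ⟨t, ht, rfl⟩
  · exact hermAux_integrable σ a b hsupp _ (hm.norm.mul measurable_const).aestronglyMeasurable
      ((hc.norm).mul continuousOn_const)
  · filter_upwards [hermAux_ae_mem σ a b hsupp] with t ht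
    have htz : (t:ℂ) - z₀ ≠ 0 := by
      intro h0
      exact hz₀ ⟨t, ht, by rwa [sub_eq_zero] at h0⟩
    exact (continuousAt_const.mul ((continuous_const.sub continuous_id).continuousAt.inv₀ htz))

/-- Zeros of the interpolation error: under the hypotheses of the Hermite interpolation
formula, for real `x ∉ F` the error `f(x) - P(x)/Q(x)` vanishes exactly at the
interpolation nodes, i.e. exactly where `W(x) = 0`. -/
theorem interpolation_error_zeros (σ : Measure ℝ) [IsFiniteMeasure σ] (a b : ℝ)
    (hab : a ≤ b) (hsupp : σ (Set.Icc a b)ᶜ = 0) (hinf : (msupport σ).Infinite)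
    (n : ℕ) (hn : 1 ≤ n) (ζ : Fin (2 * n) → ℝ) (hζ : ∀ k, ζ k ∉ Set.Icc a b)
    (P Q : Polynomial ℂ) (hP : P.degree ≤ ((n - 1 : ℕ) : WithBot ℕ))
    (hQ : Q.degree ≤ (n : ℕ)) (hQ0 : Q ≠ 0) (h : ℂ → ℂ)
    (hh : DifferentiableOn ℂ h ((fun x : ℝ => (x : ℂ)) '' Set.Icc a b)ᶜ)
    (heq : ∀ z ∈ ((fun x : ℝ => (x : ℂ)) '' Set.Icc a b)ᶜ,
      Q.eval z * (∫ t, ((t : ℂ) - z)⁻¹ ∂σ) - P.eval z = (∏ k, (z - (ζ k : ℂ))) * h z) :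
    ∀ x : ℝ, x ∉ Set.Icc a b →
      ((∫ t, ((t : ℂ) - (x : ℂ))⁻¹ ∂σ) - P.eval (x : ℂ) / Q.eval (x : ℂ) = 0 ↔
        (∏ k, ((x : ℂ) - (ζ k : ℂ))) = 0) := by
  intro x hx
  classical
  set F' : Set ℂ := (fun x : ℝ => (x : ℂ)) '' Set.Icc a b with hF'
  have hΩ : IsOpen F'ᶜ := (isCompact_Icc.image Complex.continuous_ofReal).isClosed.isOpen_compl
  have hmemF : ∀ y : ℝ, (y:ℂ) ∈ F' ↔ y ∈ Set.Icc a b := by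
    intro y
    constructor
    · rintro ⟨t, ht, hty⟩
      rwa [← Complex.ofReal_injective hty]
    · intro hy; exact ⟨y, hy, rfl⟩
  have hxΩ : (x:ℂ) ∈ F'ᶜ := fun hmem => hx ((hmemF x).1 hmem)
  have hζΩ : ∀ k, ((ζ k : ℝ):ℂ) ∈ F'ᶜ := fun k hmem => hζ k ((hmemF (ζ k)).1 hmem)
  have htne : ∀ t ∈ Set.Icc a b, ∀ z ∈ F'ᶜ, (t:ℂ) - z ≠ 0 := by
    intro t ht z hz h0
    rw [sub_eq_zero] at h0
    exact hz (h0 ▸ (hmemF t).2 ht)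
  -- the node polynomial
  set W : Polynomial ℂ := ∏ k, (X - C ((ζ k : ℝ):ℂ)) with hW
  have hWeval : ∀ z : ℂ, W.eval z = ∏ k, (z - ((ζ k:ℝ):ℂ)) := by
    intro z; simp [hW, eval_prod]
  have hWmonic : W.Monic := monic_prod_of_monic _ _ (fun k _ => monic_X_sub_C _)
  have hWdeg : W.natDegree = 2 * n := by
    rw [hW, natDegree_prod_of_monic _ _ (fun k _ => monic_X_sub_C _)]
    simp
  have hWt : ∀ t ∈ Set.Icc a b, W.eval (t:ℂ) ≠ 0 := by
    intro t ht
    rw [hWeval]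
    refine Finset.prod_ne_zero_iff.2 fun k _ => ?_
    exact_mod_cast htne t ht _ (hζΩ k)
  -- weight function ρ = Q/W
  have hQc : Continuous (fun t : ℝ => Q.eval (t:ℂ)) :=
    Q.continuous_aeval.comp Complex.continuous_ofReal
  have hWc : Continuous (fun t : ℝ => W.eval (t:ℂ)) :=
    W.continuous_aeval.comp Complex.continuous_ofReal
  set ρ : ℝ → ℂ := fun t => Q.eval (t:ℂ) * (W.eval (t:ℂ))⁻¹ with hρ
  have hρm : Measurable ρ := hQc.measurable.mul hWc.measurable.inv
  have hρc : ContinuousOn ρ (Set.Icc a b) := hQc.continuousOn.mul (hWc.continuousOn.inv₀ hWt)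
  set u : ℂ → ℂ := fun z => ∫ t, ρ t * ((t:ℂ) - z)⁻¹ ∂σ with hu
  have hQnd : Q.natDegree < n + 1 := Nat.lt_succ_of_le (natDegree_le_iff_degree_le.2 hQ)
  have hWnd : W.natDegree < 2*n + 1 := by rw [hWdeg]; omega
  set μ : ℕ → ℂ := fun m => ∫ t, ρ t * (t:ℂ)^m ∂σ with hμdef
  set Ap : Polynomial ℂ := hermDpoly Q (fun m => ∫ t, (t:ℂ)^m ∂σ) n with hApdef
  set Cp : Polynomial ℂ := hermDpoly W μ (2*n) with hCpdef
  have hstep1 : ∀ z ∈ F'ᶜ, Q.eval z * (∫ t, ((t:ℂ) - z)⁻¹ ∂σ)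
      = (∫ t, Q.eval (t:ℂ) * ((t:ℂ) - z)⁻¹ ∂σ) - Ap.eval z := by
    intro z hz
    have h1 := hermAux_step σ a b hsupp Q n hQnd (fun _ => (1:ℂ)) measurable_const
      continuousOn_const z (fun t ht => htne t ht z hz)
    simpa [hApdef, one_mul] using h1
  have hstep2 : ∀ z ∈ F'ᶜ, W.eval z * u z
      = (∫ t, Q.eval (t:ℂ) * ((t:ℂ) - z)⁻¹ ∂σ) - Cp.eval z := by
    intro z hz
    have h2 := hermAux_step σ a b hsupp W (2*n) hWnd ρ hρm hρc z (fun t ht => htne t ht z hz)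
    rw [hCpdef, hμdef, hu]
    rw [h2]
    congr 1
    apply integral_congr_ae
    filter_upwards [hermAux_ae_mem σ a b hsupp] with t ht
    have hQW : ρ t * W.eval (t:ℂ) = Q.eval (t:ℂ) := by
      rw [hρ, mul_assoc, inv_mul_cancel₀ (hWt t ht), mul_one]
    rw [hQW]
  -- the difference polynomial D
  set G : ℂ → ℂ := fun z => h z - u z with hG
  have hGc : ContinuousOn G F'ᶜ := by
    rw [hG, hu]
    exact (hh.continuousOn).sub (hermAux_cont_u σ a b hsupp ρ hρm hρc)
  set D : Polynomial ℂ := Cp - Ap - P with hD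
  have hDeval : ∀ z ∈ F'ᶜ, D.eval z = (∏ k, (z - ((ζ k:ℝ):ℂ))) * G z := by
    intro z hz
    have h1 := hstep1 z hz
    have h2 := hstep2 z hz
    have h3 := heq z hz
    rw [← hWeval z] at h3 ⊢
    simp only [hD, hG, eval_sub]
    linear_combination h3 - h1 + h2
  obtain ⟨E, hE1, hE2⟩ := hermAux_extract F'ᶜ hΩ G hGc (fun k => ((ζ k:ℝ):ℂ))
    Finset.univ (fun k _ => hζΩ k) D (fun z hz => hDeval z hz)
  have hCpdeg : Cp.degree < ((2*n : ℕ) : WithBot ℕ) := by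
    rcases hermDpoly_degree W μ (2*n) with h1 | h1
    · exact h1
    · omega
  have hApdeg : Ap.degree < ((2*n:ℕ) : WithBot ℕ) := by
    rcases hermDpoly_degree Q (fun m => ∫ t, (t:ℂ)^m ∂σ) n with h1 | h1
    · exact lt_of_lt_of_le h1 (Nat.cast_le.2 (by omega))
    · omega
  have hPdeg : P.degree < ((2*n:ℕ):WithBot ℕ) :=
    lt_of_le_of_lt hP (Nat.cast_lt.2 (by omega))
  have hDdeg : D.degree < ((2*n:ℕ):WithBot ℕ) := by
    rw [hD]
    exact lt_of_le_of_lt (degree_sub_le _ _)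
      (max_lt (lt_of_le_of_lt (degree_sub_le _ _) (max_lt hCpdeg hApdeg)) hPdeg)
  have hWE : D = W * E := by rw [hE1, hW]
  have hE0 : E = 0 := by
    by_contra hE0
    have hWdeg' : W.degree = ((2*n:ℕ) : WithBot ℕ) := by
      rw [degree_eq_natDegree hWmonic.ne_zero, hWdeg]
    have hDd : D.degree = ((2*n + E.natDegree:ℕ) : WithBot ℕ) := by
      rw [hWE, degree_mul, hWdeg', degree_eq_natDegree hE0]
      exact_mod_cast (Nat.cast_add _ _).symm
    rw [hDd] at hDdeg
    exact absurd (Nat.cast_lt.1 hDdeg) (by omega)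
  have hD0 : D = 0 := by rw [hWE, hE0, mul_zero]
  have hhu : ∀ z ∈ F'ᶜ, h z = u z := by
    intro z hz
    have hz2 := hE2 z hz
    rw [hE0, eval_zero] at hz2
    have hz3 : G z = 0 := hz2.symm
    simp only [hG] at hz3
    exact sub_eq_zero.1 hz3
  -- vanishing moments
  have hCpA : Cp = Ap + P := by
    have : Cp - Ap - P = 0 := by rw [← hD, hD0]
    linear_combination this
  have hcoeffCp : ∀ i, n ≤ i → Cp.coeff i = 0 := by
    intro i hi
    rw [hCpA, coeff_add, hermDpoly_coeff_zero Q _ n i hi,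
      coeff_eq_zero_of_degree_lt (lt_of_le_of_lt hP (Nat.cast_lt.2 (by omega))), add_zero]
  have hμ0 : ∀ d, d < n → μ d = 0 := by
    intro d
    induction d using Nat.strong_induction_on with
    | _ d ih =>
      intro hd
      have h0 := hcoeffCp (2*n-1-d) (by omega)
      rw [hCpdef, hermDpoly_coeff] at h0
      have hz : ∀ j ∈ range (2*n+1), j ≠ 2*n →
          (if 2*n-1-d < j then W.coeff j * μ (j-1-(2*n-1-d)) else 0) = 0 := by
        intro j hj hj'
        rw [Finset.mem_range] at hj
        by_cases hij : 2*n-1-d < j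
        · rw [if_pos hij, ih (j-1-(2*n-1-d)) (by omega) (by omega), mul_zero]
        · rw [if_neg hij]
      rw [Finset.sum_eq_single_of_mem (2*n) (Finset.mem_range.2 (by omega)) hz] at h0
      rw [if_pos (by omega : 2*n-1-d < 2*n)] at h0
      have hWc2n : W.coeff (2*n) = 1 := by rw [← hWdeg]; exact hWmonic.coeff_natDegree
      rw [hWc2n, one_mul] at h0
      have hdd : 2*n - 1 - (2*n-1-d) = d := by omega
      rwa [hdd] at h0
  -- orthogonality
  have hipow : ∀ m : ℕ, Integrable (fun t => ρ t * (t:ℂ)^m) σ := fun m =>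
    hermAux_integrable σ a b hsupp _
      (hρm.mul ((Complex.continuous_ofReal.pow m).measurable)).aestronglyMeasurable
      (hρc.mul ((Complex.continuous_ofReal.pow m).continuousOn))
  have hortho : ∀ p : Polynomial ℂ, p.degree < ((n:ℕ) : WithBot ℕ) →
      (∫ t, ρ t * p.eval (t:ℂ) ∂σ) = 0 := by
    intro p hpdeg
    rcases eq_or_ne p 0 with rfl | hp0
    · simp
    · have hnd : p.natDegree < n := (natDegree_lt_iff_degree_lt hp0).2 hpdeg
      have hev : ∀ t : ℝ, ρ t * p.eval (t:ℂ)
          = ∑ m ∈ range (p.natDegree + 1), p.coeff m * (ρ t * (t:ℂ)^m) := by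
        intro t
        rw [eval_eq_sum_range' (Nat.lt_succ_self _), Finset.mul_sum]
        exact Finset.sum_congr rfl fun m _ => by ring
      simp_rw [hev]
      rw [integral_finset_sum _ (fun m _ => (hipow m).const_mul _)]
      refine Finset.sum_eq_zero fun m hm => ?_
      rw [Finset.mem_range] at hm
      rw [integral_const_mul]
      have hμm : (∫ t, ρ t * (t:ℂ)^m ∂σ) = μ m := by rw [hμdef]
      rw [hμm, hμ0 m (by omega), mul_zero]
  -- conjugate polynomial and divided difference at x
  set Qs : Polynomial ℂ := Q.map (starRingEnd ℂ) with hQs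
  have hQs_eval : ∀ t : ℝ, Qs.eval (t:ℂ) = (starRingEnd ℂ) (Q.eval (t:ℂ)) := by
    intro t
    rw [hQs, eval_map, eval₂_eq_sum_range, eval_eq_sum_range, map_sum]
    exact Finset.sum_congr rfl fun i _ => by
      rw [map_mul, map_pow, Complex.conj_ofReal]
  obtain ⟨ψ, hψ⟩ := Polynomial.X_sub_C_dvd_sub_C_eval (a := ((x:ℝ):ℂ)) (p := Qs)
  have hψdeg : ψ.degree < ((n:ℕ) : WithBot ℕ) := by
    rcases eq_or_ne ψ 0 with rfl | hψ0
    · rw [degree_zero]; exact WithBot.bot_lt_coe n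
    · have hle : (Qs - C (Qs.eval ((x:ℝ):ℂ))).degree ≤ ((n:ℕ) : WithBot ℕ) := by
        refine le_trans (degree_sub_le _ _) (max_le (le_trans (degree_map_le) hQ) ?_)
        exact le_trans degree_C_le (by exact_mod_cast Nat.zero_le n)
      have hdm : (Qs - C (Qs.eval ((x:ℝ):ℂ))).degree = 1 + ψ.degree := by
        rw [hψ, degree_mul, degree_X_sub_C]
      rw [hdm, degree_eq_natDegree hψ0] at hle
      rw [degree_eq_natDegree hψ0]
      have h1 : ((1 + ψ.natDegree : ℕ) : WithBot ℕ) ≤ ((n:ℕ) : WithBot ℕ) := by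
        exact_mod_cast hle
      have h2 : 1 + ψ.natDegree ≤ n := by exact_mod_cast h1
      exact_mod_cast (by omega : ψ.natDegree < n)
  have hxne : ∀ t ∈ Set.Icc a b, (t:ℂ) - ↑x ≠ 0 := fun t ht => htne t ht ↑x hxΩ
  have hconj_eval : ∀ t ∈ Set.Icc a b, (starRingEnd ℂ) (Q.eval (t:ℂ))
      = (starRingEnd ℂ) (Q.eval ((x:ℝ):ℂ)) + ((t:ℂ) - ↑x) * ψ.eval (t:ℂ) := by
    intro t _
    have hev := congrArg (eval ((t:ℂ))) hψ
    simp only [eval_sub, eval_mul, eval_C, eval_X] at hev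
    rw [← hQs_eval t, ← hQs_eval x]
    linear_combination hev
  have hconjc : Continuous fun t : ℝ => (starRingEnd ℂ) (Q.eval (t:ℂ)) :=
    continuous_star.comp hQc
  have hinvxm : Measurable (fun t : ℝ => ((t:ℂ) - ↑x)⁻¹) :=
    ((Complex.continuous_ofReal.sub continuous_const).measurable).inv
  have hinvxc : ContinuousOn (fun t : ℝ => ((t:ℂ) - ↑x)⁻¹) (Set.Icc a b) :=
    ((Complex.continuous_ofReal.sub continuous_const).continuousOn).inv₀ hxne
  have hψcont : Continuous fun t : ℝ => ψ.eval (t:ℂ) :=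
    ψ.continuous_aeval.comp Complex.continuous_ofReal
  have hiu : Integrable (fun t => ρ t * ((t:ℂ) - ↑x)⁻¹) σ :=
    hermAux_integrable σ a b hsupp _ (hρm.mul hinvxm).aestronglyMeasurable (hρc.mul hinvxc)
  have hiψ : Integrable (fun t => ρ t * ψ.eval (t:ℂ)) σ :=
    hermAux_integrable σ a b hsupp _ (hρm.mul hψcont.measurable).aestronglyMeasurable
      (hρc.mul hψcont.continuousOn)
  have hK1 : (∫ t, ρ t * (starRingEnd ℂ) (Q.eval (t:ℂ)) * ((t:ℂ) - ↑x)⁻¹ ∂σ)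
      = (starRingEnd ℂ) (Q.eval ((x:ℝ):ℂ)) * u ↑x := by
    have hsplit : (∫ t, ρ t * (starRingEnd ℂ) (Q.eval (t:ℂ)) * ((t:ℂ) - ↑x)⁻¹ ∂σ)
        = ∫ t, ((starRingEnd ℂ) (Q.eval ((x:ℝ):ℂ)) * (ρ t * ((t:ℂ) - ↑x)⁻¹)
            + ρ t * ψ.eval (t:ℂ)) ∂σ := by
      apply integral_congr_ae
      filter_upwards [hermAux_ae_mem σ a b hsupp] with t ht
      have hinv : ((t:ℂ) - ↑x) * ((t:ℂ) - ↑x)⁻¹ = 1 := mul_inv_cancel₀ (hxne t ht)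
      rw [hconj_eval t ht]
      linear_combination (ρ t * ψ.eval (t:ℂ)) * hinv
    rw [hsplit, integral_add (hiu.const_mul _) hiψ, integral_const_mul,
      hortho ψ hψdeg, add_zero, hu]
  -- real form of the key integral
  set w : ℝ → ℝ := fun t => ∏ k, (t - ζ k) with hw
  have hwW : ∀ t : ℝ, W.eval (t:ℂ) = ((w t : ℝ) : ℂ) := by
    intro t
    rw [hWeval, hw]
    push_cast
    rfl
  have hwc : Continuous w := continuous_finset_prod _ fun k _ => continuous_id.sub continuous_const
  set v : ℝ → ℝ := fun t => ((w t) * (t - x))⁻¹ with hv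
  have hwne : ∀ t ∈ Set.Icc a b, w t ≠ 0 := by
    intro t ht h0
    apply hWt t ht
    rw [hwW t, h0]
    exact Complex.ofReal_zero
  have htxne : ∀ t ∈ Set.Icc a b, t - x ≠ 0 := by
    intro t ht h0
    apply hxne t ht
    have : ((t - x : ℝ) : ℂ) = 0 := by rw [h0]; exact Complex.ofReal_zero
    push_cast at this
    exact this
  have hvne : ∀ t ∈ Set.Icc a b, w t * (t - x) ≠ 0 :=
    fun t ht => mul_ne_zero (hwne t ht) (htxne t ht)
  have hvinvne : ∀ t ∈ Set.Icc a b, v t ≠ 0 := by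
    intro t ht
    simp only [hv]
    exact inv_ne_zero (hvne t ht)
  have hvc : ContinuousOn v (Set.Icc a b) :=
    ((hwc.continuousOn).mul (continuous_id.sub continuous_const).continuousOn).inv₀ hvne
  have hnsqc : Continuous fun t : ℝ => Complex.normSq (Q.eval (t:ℂ)) :=
    Complex.continuous_normSq.comp hQc
  have hvm : Measurable v :=
    ((hwc.measurable).mul ((continuous_id.sub continuous_const).measurable)).inv
  have hKr_int : Integrable (fun t : ℝ => Complex.normSq (Q.eval (t:ℂ)) * v t) σ :=
    hermAux_integrable σ a b hsupp _
      ((hnsqc.measurable).mul hvm).aestronglyMeasurable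
      ((hnsqc.continuousOn).mul hvc)
  set Kr : ℝ := ∫ t, Complex.normSq (Q.eval (t:ℂ)) * v t ∂σ with hKrdef
  have hK2 : (∫ t, ρ t * (starRingEnd ℂ) (Q.eval (t:ℂ)) * ((t:ℂ) - ↑x)⁻¹ ∂σ)
      = ((Kr : ℝ) : ℂ) := by
    rw [hKrdef]
    rw [show ((∫ t, Complex.normSq (Q.eval (t:ℂ)) * v t ∂σ : ℝ) : ℂ)
        = ∫ t, ((Complex.normSq (Q.eval (t:ℂ)) * v t : ℝ) : ℂ) ∂σ from integral_ofReal.symm]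
    apply integral_congr_ae
    filter_upwards [hermAux_ae_mem σ a b hsupp] with t ht
    simp only [hρ, hv]
    rw [hwW t]
    push_cast
    rw [mul_inv]
    have hmc := Complex.mul_conj (Q.eval (t:ℂ))
    linear_combination (((w t : ℝ):ℂ))⁻¹ * (((t:ℂ) - ↑x))⁻¹ * hmc
  -- Kr is nonzero
  have hKrne : Kr ≠ 0 := by
    intro hK0
    have key : ∀ s : ℝ, (∀ t ∈ Set.Icc a b, 0 < s * v t) → False := by
      intro s hsv
      have hint' : Integrable (fun t : ℝ => s * (Complex.normSq (Q.eval (t:ℂ)) * v t)) σ :=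
        hKr_int.const_mul s
      have hzero : (∫ t, s * (Complex.normSq (Q.eval (t:ℂ)) * v t) ∂σ) = 0 := by
        rw [integral_const_mul, ← hKrdef, hK0, mul_zero]
      have hnn : 0 ≤ᵐ[σ] fun t : ℝ => s * (Complex.normSq (Q.eval (t:ℂ)) * v t) := by
        filter_upwards [hermAux_ae_mem σ a b hsupp] with t ht
        have h1 : 0 ≤ Complex.normSq (Q.eval (t:ℂ)) := Complex.normSq_nonneg _
        have h2 : 0 < s * v t := hsv t ht
        simp only [Pi.zero_apply]
        nlinarith
      have hae := (integral_eq_zero_iff_of_nonneg_ae hnn hint').1 hzero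
      have haeQ : ∀ᵐ t : ℝ ∂σ, Q.eval (t:ℂ) = 0 := by
        filter_upwards [hermAux_ae_mem σ a b hsupp, hae] with t ht h0
        simp only [Pi.zero_apply] at h0
        have h2 : 0 < s * v t := hsv t ht
        have h0' : s * (Complex.normSq (Q.eval (t:ℂ)) * v t) = 0 := h0
        have h3 : Complex.normSq (Q.eval (t:ℂ)) = 0 := by
          rcases mul_eq_zero.1 h0' with h4 | h4
          · exfalso; rw [h4, zero_mul] at h2; exact lt_irrefl 0 h2
          · rcases mul_eq_zero.1 h4 with h5 | h5
            · exact h5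
            · exfalso; rw [h5, mul_zero] at h2; exact lt_irrefl 0 h2
        exact Complex.normSq_eq_zero.1 h3
      set Z : Set ℝ := {t : ℝ | Q.eval (t:ℂ) = 0} with hZ
      have hZclosed : IsClosed Z := isClosed_singleton.preimage hQc
      have hZnull : σ Zᶜ = 0 := by
        rw [MeasureTheory.ae_iff] at haeQ
        have hcompl : Zᶜ = {t : ℝ | ¬ Q.eval (t:ℂ) = 0} := by ext t; simp [hZ]
        rw [hcompl]
        exact haeQ
      have hZfin : Z.Finite := by
        have hfin : {z : ℂ | Q.IsRoot z}.Finite := Q.finite_setOf_isRoot hQ0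
        have : Z = (fun t : ℝ => (t:ℂ)) ⁻¹' {z : ℂ | Q.IsRoot z} := rfl
        rw [this]
        exact Set.Finite.preimage (Set.injOn_of_injective Complex.ofReal_injective)  hfin
      exact hinf (hZfin.subset (hermAux_msupport_subset σ Z hZclosed hZnull))
    rcases hermAux_sign a b hab v hvc hvinvne with hpos | hneg
    · exact key 1 (fun t ht => by rw [one_mul]; exact hpos t ht)
    · exact key (-1) (fun t ht => by have := hneg t ht; nlinarith)
  -- conclusion
  have hKC : (starRingEnd ℂ) (Q.eval ((x:ℝ):ℂ)) * u ↑x = ((Kr : ℝ) : ℂ) := by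
    rw [← hK1, hK2]
  have hKCne : (starRingEnd ℂ) (Q.eval ((x:ℝ):ℂ)) * u ↑x ≠ 0 := by
    rw [hKC]
    exact_mod_cast hKrne
  have hQx : Q.eval ((x:ℝ):ℂ) ≠ 0 := by
    intro h0
    apply hKCne
    rw [h0, map_zero, zero_mul]
  have hux : u ((x:ℝ):ℂ) ≠ 0 := by
    intro h0
    apply hKCne
    rw [h0, mul_zero]
  have hhx : h ((x:ℝ):ℂ) = u ((x:ℝ):ℂ) := hhu _ hxΩ
  have hhxne : h ((x:ℝ):ℂ) ≠ 0 := by rw [hhx]; exact hux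
  have heqx := heq ((x:ℝ):ℂ) hxΩ
  constructor
  · intro hzero
    have hf : (∫ t, ((t:ℂ) - ↑x)⁻¹ ∂σ) = P.eval ((x:ℝ):ℂ) / Q.eval ((x:ℝ):ℂ) :=
      sub_eq_zero.1 hzero
    have hQf : Q.eval ((x:ℝ):ℂ) * (∫ t, ((t:ℂ) - ↑x)⁻¹ ∂σ) - P.eval ((x:ℝ):ℂ) = 0 := by
      rw [hf, mul_div_cancel₀ _ hQx, sub_self]
    rw [heqx] at hQf
    rcases mul_eq_zero.1 hQf with h1 | h1
    · exact h1
    · exact absurd h1 hhxne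
  · intro hprod
    rw [hprod, zero_mul] at heqx
    have hf : (∫ t, ((t:ℂ) - ↑x)⁻¹ ∂σ) = P.eval ((x:ℝ):ℂ) / Q.eval ((x:ℝ):ℂ) := by
      rw [eq_div_iff hQx]
      linear_combination heqx
    rw [hf, sub_self]
end
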